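/- arXiv:0810.4812 — 2 statements merged into one kernel-verified Lean document; each statement's English description precedes it below -/
import Mathlib

section
/- Symmetric Lovász Local Lemma for SAT: if F is a k-CNF formula (k ≥ 2) in which each clause shares variables with at most 2^{k-2} other clauses, then F is satisfiable. -/
namespace Stmt17Aux
open Finset
variable {V : Type*} [DecidableEq V]

def extA (U : Finset V) (f : {v // v ∈ U} → Bool) (v : V) : Bool :=
  if h : v ∈ U then f ⟨v, h⟩ else false

def satC (U : Finset V) (f : {v // v ∈ U} → Bool) (C : Finset (V × Bool)) : Prop :=
  ∃ l ∈ C, extA U f l.1 = l.2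

instance (U : Finset V) (f : {v // v ∈ U} → Bool) (C : Finset (V × Bool)) :
    Decidable (satC U f C) := by
  unfold satC; infer_instance

def cnt (U : Finset V) (S : Finset (Finset (V × Bool))) : ℕ :=
  (univ.filter fun f : {v // v ∈ U} → Bool => ∀ C ∈ S, satC U f C).card

lemma cnt_insert_split (U : Finset V) (S : Finset (Finset (V × Bool)))
    (C : Finset (V × Bool)) :
    cnt U S = cnt U (insert C S) +
      (univ.filter fun f : {v // v ∈ U} → Bool =>
        (∀ D ∈ S, satC U f D) ∧ ¬ satC U f C).card := by
  unfold cnt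
  have h := Finset.card_filter_add_card_filter_not
    (s := (univ.filter fun f : {v // v ∈ U} → Bool => ∀ C ∈ S, satC U f C))
    (p := fun f => satC U f C)
  rw [Finset.filter_filter, Finset.filter_filter] at h
  have e1 : (univ.filter fun f : {v // v ∈ U} → Bool => ∀ D ∈ insert C S, satC U f D)
      = univ.filter fun f => (∀ C_1 ∈ S, satC U f C_1) ∧ satC U f C := by
    apply Finset.filter_congr; intro f _
    simp [Finset.forall_mem_insert, and_comm]
  rw [e1]
  omega

lemma card_agree (U T : Finset V) (hTU : T ⊆ U) (g : {v // v ∈ U} → Bool) :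
    (univ.filter fun f : {v // v ∈ U} → Bool =>
        ∀ v : {v // v ∈ U}, (v : V) ∉ T → f v = g v).card = 2 ^ T.card := by
  have key : (univ.filter fun f : {v // v ∈ U} → Bool =>
        ∀ v : {v // v ∈ U}, (v : V) ∉ T → f v = g v).card
      = (univ : Finset ({v // v ∈ T} → Bool)).card := by
    apply Finset.card_nbij' (i := fun f (t : {v // v ∈ T}) => f ⟨t.1, hTU t.2⟩)
      (j := fun h => fun (v : {v // v ∈ U}) => if hv : (v : V) ∈ T then h ⟨v.1, hv⟩ else g v)
    · intro f _; exact mem_univ _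
    · intro h _
      simp only [mem_coe, mem_filter, mem_univ, true_and]
      intro v hv
      simp [dif_neg hv]
    · intro f hf
      simp only [mem_coe, mem_filter, mem_univ, true_and] at hf
      funext v
      by_cases hv : (v : V) ∈ T
      · simp [dif_pos hv]
      · simp [dif_neg hv, hf v hv]
    · intro h _
      funext t
      simp [dif_pos t.2]
  rw [key, Finset.card_univ, Fintype.card_fun, Fintype.card_bool, Fintype.card_coe]

lemma key (k : ℕ) (hk : 2 ≤ k) (U : Finset V) (F : Finset (Finset (V × Bool)))
    (hcard : ∀ C ∈ F, C.card = k)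
    (hdist : ∀ C ∈ F, ∀ l₁ ∈ C, ∀ l₂ ∈ C, l₁.1 = l₂.1 → l₁ = l₂)
    (hnbhd : ∀ C ∈ F,
      (F.filter (fun D => D ≠ C ∧ ((D.image Prod.fst) ∩ (C.image Prod.fst)).Nonempty)).card
        ≤ 2 ^ (k - 2))
    (hU : ∀ C ∈ F, ∀ l ∈ C, l.1 ∈ U) :
    ∀ n (S : Finset (Finset (V × Bool))), S ⊆ F → S.card ≤ n → ∀ C ∈ F,
      2 ^ k * cnt U S ≤ 2 ^ k * cnt U (insert C S) + 2 * cnt U S := by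
  intro n
  induction n using Nat.strong_induction_on with
  | _ n IH =>
  intro S hSF hSn C hCF
  by_cases hCS : C ∈ S
  · rw [Finset.insert_eq_self.mpr hCS]
    exact Nat.le_add_right _ _
  -- setup
  set T : Finset V := C.image Prod.fst with hT
  have hTU : T ⊆ U := by
    intro v hv
    obtain ⟨l, hl, rfl⟩ := mem_image.mp hv
    exact hU C hCF l hl
  have hTk : T.card = k := by
    rw [hT, Finset.card_image_of_injOn (fun l hl l' hl' h => hdist C hCF l hl l' hl' h)]
    exact hcard C hCF
  set N : Finset (Finset (V × Bool)) :=
    S.filter (fun D => ((D.image Prod.fst) ∩ T).Nonempty) with hNdef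
  set S₂ : Finset (Finset (V × Bool)) :=
    S.filter (fun D => ¬ ((D.image Prod.fst) ∩ T).Nonempty) with hS₂def
  have hS₂S : S₂ ⊆ S := filter_subset _ _
  have hNS : N ⊆ S := filter_subset _ _
  have hNcard : N.card ≤ 2 ^ (k - 2) := by
    refine le_trans (Finset.card_le_card ?_) (hnbhd C hCF)
    intro D hD
    rw [mem_filter] at hD ⊢
    exact ⟨hSF hD.1, fun h => hCS (h ▸ hD.1), hD.2⟩
  -- bad assignment on T
  set b : V → Bool := fun v => if (v, true) ∈ C then false else true with hbdef
  have hb : ∀ l ∈ C, b l.1 = !l.2 := by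
    rintro ⟨v, bv⟩ hl
    cases bv
    · have : (v, true) ∉ C := by
        intro h
        have := hdist C hCF _ h _ hl rfl
        simp at this
      simp [hbdef, this]
    · simp [hbdef, hl]
  set Φ : ({v // v ∈ U} → Bool) → ({v // v ∈ U} → Bool) :=
    fun f v => if (v : V) ∈ T then b v else f v with hΦdef
  have hΦagree : ∀ f (v : {v // v ∈ U}), (v : V) ∉ T → Φ f v = f v := by
    intro f v hv; simp [hΦdef, if_neg hv]
  have hbool : ∀ x y : Bool, x ≠ y → x = !y := by decide
  have hviol : ∀ f, ¬ satC U f C ↔ ∀ v : {v // v ∈ U}, (v : V) ∈ T → f v = b v := by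
    intro f
    constructor
    · intro hns v hvT
      obtain ⟨l, hl, hlv⟩ := mem_image.mp hvT
      have hlU : l.1 ∈ U := hU C hCF l hl
      have hne : extA U f l.1 ≠ l.2 := fun h => hns ⟨l, hl, h⟩
      rw [extA, dif_pos hlU] at hne
      have hv : v = ⟨l.1, hlU⟩ := Subtype.ext hlv.symm
      rw [hv, hbool _ _ hne]
      exact (hb l hl).symm
    · rintro ha ⟨l, hl, he⟩
      have hlU : l.1 ∈ U := hU C hCF l hl
      have hvT : l.1 ∈ T := mem_image_of_mem _ hl
      rw [extA, dif_pos hlU] at he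
      have := ha ⟨l.1, hlU⟩ hvT
      rw [he, hb l hl] at this
      simp at this
  have hsatAgree : ∀ (f g : {v // v ∈ U} → Bool),
      (∀ v : {v // v ∈ U}, (v : V) ∉ T → f v = g v) →
      ∀ D ∈ S₂, (satC U f D ↔ satC U g D) := by
    intro f g hag D hD
    have hdisj : ∀ l ∈ D, l.1 ∉ T := by
      intro l hl hmem
      exact (mem_filter.mp hD).2 ⟨l.1, mem_inter.mpr ⟨mem_image_of_mem _ hl, hmem⟩⟩
    have hext : ∀ l ∈ D, extA U f l.1 = extA U g l.1 := by
      intro l hl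
      rw [extA, extA]
      by_cases hlU : l.1 ∈ U
      · rw [dif_pos hlU, dif_pos hlU]; exact hag ⟨l.1, hlU⟩ (hdisj l hl)
      · rw [dif_neg hlU, dif_neg hlU]
    exact ⟨fun ⟨l, hl, h⟩ => ⟨l, hl, (hext l hl).symm.trans h⟩,
           fun ⟨l, hl, h⟩ => ⟨l, hl, (hext l hl).trans h⟩⟩
  -- counting sets
  set P := univ.filter (fun f : {v // v ∈ U} → Bool => ∀ D ∈ S₂, satC U f D) with hPdef
  set B := univ.filter (fun f : {v // v ∈ U} → Bool =>
    (∀ D ∈ S₂, satC U f D) ∧ ¬ satC U f C) with hBdef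
  have hΦmaps : ∀ f ∈ P, Φ f ∈ B := by
    intro f hf
    rw [hPdef, mem_filter] at hf
    rw [hBdef, mem_filter]
    refine ⟨mem_univ _, fun D hD => (hsatAgree (Φ f) f (hΦagree f) D hD).mpr (hf.2 D hD), ?_⟩
    exact (hviol (Φ f)).mpr (fun v hv => by simp [hΦdef, if_pos hv])
  have hfib : ∀ g ∈ B, (P.filter fun f => Φ f = g)
      = univ.filter (fun f : {v // v ∈ U} → Bool =>
          ∀ v : {v // v ∈ U}, (v : V) ∉ T → f v = g v) := by
    intro g hg
    rw [hBdef, mem_filter] at hg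
    obtain ⟨-, gsat, gviol⟩ := hg
    have hgb : ∀ v : {v // v ∈ U}, (v : V) ∈ T → g v = b v := (hviol g).mp gviol
    ext f
    simp only [mem_filter, mem_univ, true_and, hPdef]
    constructor
    · rintro ⟨-, hΦf⟩ v hv
      rw [← hΦf]; exact (hΦagree f v hv).symm
    · intro hag
      refine ⟨fun D hD => (hsatAgree f g hag D hD).mpr (gsat D hD), ?_⟩
      funext v
      by_cases hv : (v : V) ∈ T
      · rw [hΦdef]; simp only [if_pos hv]; exact (hgb v hv).symm
      · rw [hΦdef]; simp only [if_neg hv]; exact hag v hv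
  have hcount : cnt U S₂ = B.card * 2 ^ k := by
    have h1 : P.card = ∑ g ∈ B, (P.filter fun f => Φ f = g).card :=
      Finset.card_eq_sum_card_fiberwise hΦmaps
    have h2 : ∀ g ∈ B, (P.filter fun f => Φ f = g).card = 2 ^ k := by
      intro g hg
      rw [hfib g hg, card_agree U T hTU g, hTk]
    rw [show cnt U S₂ = P.card from rfl, h1, Finset.sum_congr rfl h2, Finset.sum_const,
      smul_eq_mul]
  -- A : violating set for S
  set A := univ.filter (fun f : {v // v ∈ U} → Bool =>
    (∀ D ∈ S, satC U f D) ∧ ¬ satC U f C) with hAdef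
  have hsplit : cnt U S = cnt U (insert C S) + A.card := cnt_insert_split U S C
  have hAB : A.card ≤ B.card := by
    apply Finset.card_le_card
    intro f hf
    rw [hAdef, mem_filter] at hf
    rw [hBdef, mem_filter]
    exact ⟨hf.1, fun D hD => hf.2.1 D (hS₂S hD), hf.2.2⟩
  -- step 3 : cnt U S₂ ≤ 2 * cnt U S
  have hz2 : cnt U S₂ ≤ 2 * cnt U S := by
    by_cases hN : N = ∅
    · have hS₂eq : S₂ = S := by
        rw [hS₂def]
        apply Finset.filter_true_of_mem
        intro D hD
        rw [hNdef, Finset.filter_eq_empty_iff] at hN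
        exact hN hD
      rw [hS₂eq]; omega
    · have hNne : N.Nonempty := nonempty_iff_ne_empty.mpr hN
      have hcardsplit : N.card + S₂.card = S.card := by
        have := Finset.card_filter_add_card_filter_not
          (s := S) (p := fun D => ((D.image Prod.fst) ∩ T).Nonempty)
        rw [← hNdef] at this
        convert this using 2
      have hS₂n : S₂.card < n := by
        have h1 : 1 ≤ N.card := Finset.card_pos.mpr hNne
        omega
      have hS₂F : S₂ ⊆ F := hS₂S.trans hSF
      -- per-neighbor bound
      have hW : ∀ D ∈ N, 2 ^ k * (univ.filter (fun f : {v // v ∈ U} → Bool =>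
          (∀ E ∈ S₂, satC U f E) ∧ ¬ satC U f D)).card ≤ 2 * cnt U S₂ := by
        intro D hD
        have hDF : D ∈ F := hSF (hNS hD)
        have ihD := IH S₂.card hS₂n S₂ hS₂F le_rfl D hDF
        have splitD := cnt_insert_split U S₂ D
        set W := (univ.filter (fun f : {v // v ∈ U} → Bool =>
          (∀ E ∈ S₂, satC U f E) ∧ ¬ satC U f D)).card
        rw [splitD, mul_add] at ihD
        have := (add_le_add_iff_left (2 ^ k * cnt U (insert D S₂))).mp ihD
        rw [splitD]
        exact this
      -- partition cnt U S₂
      have hSiff : ∀ f : {v // v ∈ U} → Bool,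
          (∀ D ∈ S, satC U f D) ↔ ((∀ D ∈ S₂, satC U f D) ∧ ∀ D ∈ N, satC U f D) := by
        intro f
        constructor
        · exact fun h => ⟨fun D hD => h D (hS₂S hD), fun D hD => h D (hNS hD)⟩
        · rintro ⟨h1, h2⟩ D hD
          by_cases hn : ((D.image Prod.fst) ∩ T).Nonempty
          · exact h2 D (mem_filter.mpr ⟨hD, hn⟩)
          · exact h1 D (mem_filter.mpr ⟨hD, hn⟩)
      set R := (univ.filter (fun f : {v // v ∈ U} → Bool =>
        (∀ E ∈ S₂, satC U f E) ∧ ¬ ∀ D ∈ N, satC U f D)).card with hRdef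
      have hpart : cnt U S₂ = cnt U S + R := by
        have h := Finset.card_filter_add_card_filter_not
          (s := P) (p := fun f => ∀ D ∈ N, satC U f D)
        rw [hPdef, Finset.filter_filter, Finset.filter_filter] at h
        have e1 : (univ.filter fun f : {v // v ∈ U} → Bool =>
            (∀ D ∈ S₂, satC U f D) ∧ ∀ D ∈ N, satC U f D)
            = univ.filter fun f => ∀ D ∈ S, satC U f D := by
          apply Finset.filter_congr; intro f _
          exact (hSiff f).symm
        rw [e1] at h
        rw [show cnt U S₂ = (univ.filter
          fun f : {v // v ∈ U} → Bool => ∀ D ∈ S₂, satC U f D).card from rfl, show cnt U S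
          = (univ.filter fun f : {v // v ∈ U} → Bool => ∀ D ∈ S, satC U f D).card from rfl,
          hRdef]
        omega
      have hR : R ≤ ∑ D ∈ N, (univ.filter (fun f : {v // v ∈ U} → Bool =>
          (∀ E ∈ S₂, satC U f E) ∧ ¬ satC U f D)).card := by
        rw [hRdef]
        refine le_trans (Finset.card_le_card ?_) (Finset.card_biUnion_le)
        intro f hf
        rw [mem_filter] at hf
        obtain ⟨-, h1, h2⟩ := hf
        rw [Finset.mem_biUnion]
        push_neg at h2
        obtain ⟨D, hD, hnsat⟩ := h2
        exact ⟨D, hD, mem_filter.mpr ⟨mem_univ _, h1, hnsat⟩⟩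
      -- combine
      set q := 2 ^ (k - 2) with hqdef
      have hq : 0 < q := Nat.pow_pos (by norm_num)
      have hpow : 2 ^ k = 4 * q := by
        rw [hqdef, show (4 : ℕ) = 2 ^ 2 by norm_num, ← pow_add]
        congr 1
        omega
      have step1 : 2 ^ k * R ≤ N.card * (2 * cnt U S₂) := by
        calc 2 ^ k * R ≤ 2 ^ k * ∑ D ∈ N, (univ.filter (fun f : {v // v ∈ U} → Bool =>
              (∀ E ∈ S₂, satC U f E) ∧ ¬ satC U f D)).card :=
              Nat.mul_le_mul_left _ hR
          _ = ∑ D ∈ N, 2 ^ k * (univ.filter (fun f : {v // v ∈ U} → Bool =>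
              (∀ E ∈ S₂, satC U f E) ∧ ¬ satC U f D)).card := Finset.mul_sum _ _ _
          _ ≤ ∑ _D ∈ N, 2 * cnt U S₂ := Finset.sum_le_sum hW
          _ = N.card * (2 * cnt U S₂) := by rw [Finset.sum_const, smul_eq_mul]
      have step2 : N.card * (2 * cnt U S₂) ≤ q * (2 * cnt U S₂) :=
        Nat.mul_le_mul_right _ hNcard
      have main : 4 * q * cnt U S₂ ≤ 4 * q * cnt U S + q * (2 * cnt U S₂) := by
        calc 4 * q * cnt U S₂ = 2 ^ k * cnt U S₂ := by rw [hpow]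
          _ = 2 ^ k * cnt U S + 2 ^ k * R := by rw [hpart, mul_add]
          _ ≤ 2 ^ k * cnt U S + q * (2 * cnt U S₂) := by
              exact Nat.add_le_add_left (le_trans step1 step2) _
          _ = 4 * q * cnt U S + q * (2 * cnt U S₂) := by rw [hpow]
      have main2 : q * (2 * cnt U S₂) ≤ q * (4 * cnt U S) := by
        have h4 : 4 * q * cnt U S₂ = q * (2 * cnt U S₂) + q * (2 * cnt U S₂) := by ring
        have h5 : 4 * q * cnt U S = q * (4 * cnt U S) := by ring
        rw [h4, h5] at main
        omega
      have := Nat.le_of_mul_le_mul_left main2 hq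
      omega
  -- conclude
  have hka : 2 ^ k * A.card ≤ 2 * cnt U S := by
    calc 2 ^ k * A.card ≤ 2 ^ k * B.card := Nat.mul_le_mul_left _ hAB
      _ = B.card * 2 ^ k := Nat.mul_comm _ _
      _ = cnt U S₂ := hcount.symm
      _ ≤ 2 * cnt U S := hz2
  calc 2 ^ k * cnt U S = 2 ^ k * cnt U (insert C S) + 2 ^ k * A.card := by
        rw [hsplit, mul_add]
    _ ≤ 2 ^ k * cnt U (insert C S) + 2 * cnt U S := Nat.add_le_add_left hka _

end Stmt17Aux

open Finset in
/-- Symmetric Lovász Local Lemma for SAT: if `F` is a `k`-CNF formula (`k ≥ 2`) in which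
every clause shares variables with at most `2^(k-2)` other clauses, then `F` is
satisfiable. -/
theorem stmt17 {V : Type*} [DecidableEq V] (k : ℕ) (hk : 2 ≤ k)
    (F : Finset (Finset (V × Bool)))
    (hcard : ∀ C ∈ F, C.card = k)
    (hdist : ∀ C ∈ F, ∀ l₁ ∈ C, ∀ l₂ ∈ C, l₁.1 = l₂.1 → l₁ = l₂)
    (hnbhd : ∀ C ∈ F,
      (F.filter (fun D => D ≠ C ∧ ((D.image Prod.fst) ∩ (C.image Prod.fst)).Nonempty)).card
        ≤ 2 ^ (k - 2)) :
    ∃ α : V → Bool, ∀ C ∈ F, ∃ l ∈ C, α l.1 = l.2 := by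
  classical
  set U := F.sup (fun C => C.image Prod.fst) with hUdef
  have hU : ∀ C ∈ F, ∀ l ∈ C, l.1 ∈ U :=
    fun C hC l hl => (Finset.le_sup (f := fun C => C.image Prod.fst) hC)
      (mem_image_of_mem _ hl)
  have hkey := Stmt17Aux.key k hk U F hcard hdist hnbhd hU
  have hpos : ∀ S, S ⊆ F → 0 < Stmt17Aux.cnt U S := by
    intro S
    induction S using Finset.induction_on with
    | empty =>
      intro _
      unfold Stmt17Aux.cnt
      rw [Finset.filter_true_of_mem
        (fun f _ C hC => absurd hC (Finset.notMem_empty C)), Finset.card_univ]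
      exact Fintype.card_pos
    | @insert C S hCS ih =>
      intro hsub
      have hSF : S ⊆ F := (Finset.subset_insert _ _).trans hsub
      have hz := ih hSF
      have hCF : C ∈ F := hsub (mem_insert_self _ _)
      have h := hkey S.card S hSF le_rfl C hCF
      have h4 : 4 ≤ 2 ^ k := by
        calc (4:ℕ) = 2 ^ 2 := by norm_num
          _ ≤ 2 ^ k := Nat.pow_le_pow_right (by norm_num) hk
      by_contra hc
      push_neg at hc
      have h0 : Stmt17Aux.cnt U (insert C S) = 0 := by omega
      rw [h0, mul_zero, zero_add] at h
      have : 4 * Stmt17Aux.cnt U S ≤ 2 * Stmt17Aux.cnt U S :=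
        le_trans (Nat.mul_le_mul_right _ h4) h
      omega
  obtain ⟨f, hf⟩ := Finset.card_pos.mp (hpos F (subset_refl F))
  rw [Finset.mem_filter] at hf
  exact ⟨Stmt17Aux.extA U f, fun C hC => hf.2 C hC⟩
end

section
/- Progress invariant of the local correction procedure (abstract form): let F be a set of clauses and suppose a procedure, when called on a violated clause C, only modifies variables occurring in clauses labelling vertices of its recursion tree τ, and only returns when all clauses in Γ⁺(D) are satisfied for every clause D it recursed on. Then upon termination, every clause of F sharing a variable with vbl(τ) is satisfied; in particular, the set of violated clauses after the call is a strict subset of the set before. -/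
/-- Progress invariant of the local correction procedure (abstract form): consider a run
with states `α 0, …, α T` where step `t` resamples only the variables of the clause
`lbl t`, and every call made on `lbl t` returns at some later time `t' ≤ T` at which all
clauses sharing variables with `lbl t` are satisfied. Then every clause of `F` sharing a
variable with some resampled clause is satisfied by `α T`; in particular, if the run was
started on a violated (nonempty) clause `lbl 0 ∈ F`, the set of violated clauses at the
end is a strict subset of the set of violated clauses at the beginning. -/
theorem stmt18 {V : Type*} [DecidableEq V] (F : Finset (Finset (V × Bool))) (T : ℕ)
    (α : ℕ → V → Bool) (lbl : ℕ → Finset (V × Bool))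
    (hmod : ∀ t < T, ∀ x : V, x ∉ (lbl t).image Prod.fst → α (t + 1) x = α t x)
    (hret : ∀ t < T, ∃ t', t < t' ∧ t' ≤ T ∧ ∀ D ∈ F,
      ((D.image Prod.fst) ∩ ((lbl t).image Prod.fst)).Nonempty → ∃ l ∈ D, α t' l.1 = l.2)
    (hT : 0 < T) (hroot : lbl 0 ∈ F) (hne : (lbl 0).Nonempty)
    (hviol : ¬ ∃ l ∈ lbl 0, α 0 l.1 = l.2) :
    (∀ D ∈ F, (∃ t < T, ((D.image Prod.fst) ∩ ((lbl t).image Prod.fst)).Nonempty) →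
      ∃ l ∈ D, α T l.1 = l.2) ∧
    {D | D ∈ F ∧ ¬ ∃ l ∈ D, α T l.1 = l.2} ⊂ {D | D ∈ F ∧ ¬ ∃ l ∈ D, α 0 l.1 = l.2} := by
  -- preservation lemma
  have hpres : ∀ (x : V) (a b : ℕ), a ≤ b → b ≤ T →
      (∀ s, a ≤ s → s < b → x ∉ (lbl s).image Prod.fst) → α b x = α a x := by
    intro x a b hab hbT hno
    induction b with
    | zero => obtain rfl : a = 0 := Nat.le_zero.mp hab; rfl
    | succ n ih =>
      rcases Nat.lt_or_ge a (n+1) with h | h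
      · have : α (n+1) x = α n x :=
          hmod n (by omega) x (hno n (by omega) (by omega))
        rw [this, ih (by omega) (by omega) (fun s hs hs' => hno s hs (by omega))]
      · have : a = n + 1 := by omega
        rw [this]
  have part1 : ∀ D ∈ F, (∃ t < T, ((D.image Prod.fst) ∩ ((lbl t).image Prod.fst)).Nonempty) →
      ∃ l ∈ D, α T l.1 = l.2 := by
    intro D hD ⟨t0, ht0, hsh⟩
    classical
    set S : Finset ℕ := (Finset.range T).filter
      (fun t => ((D.image Prod.fst) ∩ ((lbl t).image Prod.fst)).Nonempty) with hS
    have hSne : S.Nonempty := ⟨t0, by simp [hS, Finset.mem_filter, ht0, hsh]⟩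
    set m := S.max' hSne with hm
    have hmS : m ∈ S := S.max'_mem hSne
    rw [hS, Finset.mem_filter, Finset.mem_range] at hmS
    obtain ⟨t', hmt', ht'T, hsat⟩ := hret m hmS.1
    obtain ⟨l, hl, hlv⟩ := hsat D hD hmS.2
    refine ⟨l, hl, ?_⟩
    have : α T l.1 = α t' l.1 := by
      apply hpres l.1 t' T ht'T le_rfl
      intro s hs hsT hmem
      have hsS : s ∈ S := by
        rw [hS, Finset.mem_filter, Finset.mem_range]
        refine ⟨hsT, ⟨l.1, Finset.mem_inter.2 ⟨?_, hmem⟩⟩⟩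
        exact Finset.mem_image.2 ⟨l, hl, rfl⟩
      have := S.le_max' s hsS
      omega
    rw [this, hlv]
  refine ⟨part1, ?_⟩
  constructor
  · intro D hD
    simp only [Set.mem_setOf_eq] at *
    refine ⟨hD.1, fun hc => hD.2 ?_⟩
    obtain ⟨l, hl, hlv⟩ := hc
    by_cases hsh : ∃ t < T, ((D.image Prod.fst) ∩ ((lbl t).image Prod.fst)).Nonempty
    · exact part1 D hD.1 hsh
    · push_neg at hsh
      refine ⟨l, hl, ?_⟩
      have : α T l.1 = α 0 l.1 := by
        apply hpres l.1 0 T (Nat.zero_le _) le_rfl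
        intro s _ hsT hmem
        have : ((D.image Prod.fst) ∩ ((lbl s).image Prod.fst)).Nonempty :=
          ⟨l.1, Finset.mem_inter.2 ⟨Finset.mem_image.2 ⟨l, hl, rfl⟩, hmem⟩⟩
        exact Finset.nonempty_iff_ne_empty.1 this (hsh s hsT)
      rw [this, hlv]
  · intro hsub
    have h0 : lbl 0 ∈ {D | D ∈ F ∧ ¬ ∃ l ∈ D, α 0 l.1 = l.2} := ⟨hroot, hviol⟩
    have hT0 := hsub h0
    obtain ⟨x, hx⟩ := hne
    have hsat := part1 (lbl 0) hroot ⟨0, hT, ⟨x.1,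
      Finset.mem_inter.2 ⟨Finset.mem_image.2 ⟨x, hx, rfl⟩, Finset.mem_image.2 ⟨x, hx, rfl⟩⟩⟩⟩
    exact hT0.2 hsat
end
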